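/- Let (A, C, B) be a recollement of abelian categories and let M be an object of C with i^*(j_*(j^*(M))) = 0 (so that the unit η_M : M → j_* j^*(M) is epic). Then there is a short exact sequence 0 → i_* i^! j_! j^*(M) → j_! j^*(M) ⊕ i_* i^!(M) → M → 0 in C, where the first map has components σ_{j_! j^*(M)} and i_* i^!(ε_M), and the second map is (−ε_M, σ_M), with σ the counit of (i_*, i^!) and ε the counit of (j_!, j^*). -/

import Mathlib

open CategoryTheory CategoryTheory.Limits

universe v₁ v₂ v₃ u₁ u₂ u₃

/-- A recollement of abelian categories `(𝒜, 𝒞, ℬ)`, consisting of additive functors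
`i_* : 𝒜 ⥤ 𝒞`, `i^*, i^! : 𝒞 ⥤ 𝒜`, `j^* : 𝒞 ⥤ ℬ`, `j_!, j_* : ℬ ⥤ 𝒞` with adjoint pairs
`(i^*, i_*)`, `(i_*, i^!)`, `(j_!, j^*)`, `(j^*, j_*)`, with `i_*`, `j_!`, `j_*` fully faithful
and the essential image of `i_*` equal to the kernel of `j^*`. -/
structure Recollement (𝒜 : Type u₁) (𝒞 : Type u₂) (ℬ : Type u₃)
    [Category.{v₁} 𝒜] [Category.{v₂} 𝒞] [Category.{v₃} ℬ]
    [Abelian 𝒜] [Abelian 𝒞] [Abelian ℬ] where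
  /-- the functor `i^* : 𝒞 ⥤ 𝒜` -/
  iStar : 𝒞 ⥤ 𝒜
  /-- the functor `i_* : 𝒜 ⥤ 𝒞` -/
  iIns : 𝒜 ⥤ 𝒞
  /-- the functor `i^! : 𝒞 ⥤ 𝒜` -/
  iShriek : 𝒞 ⥤ 𝒜
  /-- the functor `j_! : ℬ ⥤ 𝒞` -/
  jShriek : ℬ ⥤ 𝒞
  /-- the functor `j^* : 𝒞 ⥤ ℬ` -/
  jStar : 𝒞 ⥤ ℬ
  /-- the functor `j_* : ℬ ⥤ 𝒞` -/
  jIns : ℬ ⥤ 𝒞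
  iStar_additive : iStar.Additive
  iIns_additive : iIns.Additive
  iShriek_additive : iShriek.Additive
  jShriek_additive : jShriek.Additive
  jStar_additive : jStar.Additive
  jIns_additive : jIns.Additive
  /-- the adjunction `i^* ⊣ i_*` -/
  adj₁ : iStar ⊣ iIns
  /-- the adjunction `i_* ⊣ i^!` -/
  adj₂ : iIns ⊣ iShriek
  /-- the adjunction `j_! ⊣ j^*` -/
  adj₃ : jShriek ⊣ jStar
  /-- the adjunction `j^* ⊣ j_*` -/
  adj₄ : jStar ⊣ jIns
  iIns_full : iIns.Full
  iIns_faithful : iIns.Faithful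
  jShriek_full : jShriek.Full
  jShriek_faithful : jShriek.Faithful
  jIns_full : jIns.Full
  jIns_faithful : jIns.Faithful
  /-- `im i_* = ker j^*` -/
  im_eq_ker : ∀ X : 𝒞, IsZero (jStar.obj X) ↔ ∃ A₀ : 𝒜, Nonempty (iIns.obj A₀ ≅ X)

variable {𝒜 : Type u₁} {𝒞 : Type u₂} {ℬ : Type u₃}
  [Category.{v₁} 𝒜] [Category.{v₂} 𝒞] [Category.{v₃} ℬ]
  [Abelian 𝒜] [Abelian 𝒞] [Abelian ℬ]

/-- `0 ⟶ X ⟶ Y ⟶ Z ⟶ 0` is a short exact sequence. -/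
def IsSES {𝒟 : Type*} [Category 𝒟] [Abelian 𝒟] {X Y Z : 𝒟}
    (f : X ⟶ Y) (g : Y ⟶ Z) : Prop :=
  ∃ w : f ≫ g = 0, (ShortComplex.mk f g w).ShortExact

namespace Recollement

variable (R : Recollement 𝒜 𝒞 ℬ)

lemma isZero_jStar_iIns (A : 𝒜) : IsZero (R.jStar.obj (R.iIns.obj A)) :=
  (R.im_eq_ker _).mpr ⟨A, ⟨Iso.refl _⟩⟩

lemma sigma_eta_zero (X : 𝒞) :
    R.adj₂.counit.app X ≫ R.adj₄.unit.app X = 0 := by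
  haveI := R.jIns_additive
  haveI := R.jStar_additive
  have h0 : IsZero ((R.jStar ⋙ R.jIns).obj (R.iIns.obj (R.iShriek.obj X))) :=
    R.jIns.map_isZero (R.isZero_jStar_iIns _)
  have hnat := R.adj₄.unit.naturality (R.adj₂.counit.app X)
  simp only [Functor.id_map, Functor.id_obj] at hnat
  rw [hnat]
  have h00 := h0.eq_of_tgt (R.adj₄.unit.app ((R.iShriek ⋙ R.iIns).obj X)) 0
  rw [h00, zero_comp]

lemma mono_sigma (X : 𝒞) : Mono (R.adj₂.counit.app X) := by
  haveI := R.iIns_full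
  haveI := R.iIns_faithful
  haveI := R.iIns_additive
  haveI := Functor.preservesMonomorphisms_of_adjunction R.adj₃
  set σ := R.adj₂.counit.app X with hσ
  apply Abelian.mono_of_kernel_ι_eq_zero
  have hz : IsZero (R.jStar.obj (kernel σ)) :=
    IsZero.of_mono (R.jStar.map (kernel.ι σ)) (R.isZero_jStar_iIns _)
  obtain ⟨A, ⟨e⟩⟩ := (R.im_eq_ker _).mp hz
  have hm : (e.hom ≫ kernel.ι σ) ≫ σ = 0 := by
    rw [Category.assoc, kernel.condition, comp_zero]
  have hmf : R.iIns.map (R.iIns.preimage (e.hom ≫ kernel.ι σ)) = e.hom ≫ kernel.ι σ :=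
    R.iIns.map_preimage _
  have h1 : (R.adj₂.homEquiv A X).symm (R.iIns.preimage (e.hom ≫ kernel.ι σ)) = 0 := by
    rw [Adjunction.homEquiv_counit, hmf]; exact hm
  have h2 : (R.adj₂.homEquiv A X).symm 0 = 0 := by
    rw [Adjunction.homEquiv_counit, Functor.map_zero, zero_comp]
  have hf0 : R.iIns.preimage (e.hom ≫ kernel.ι σ) = 0 :=
    (R.adj₂.homEquiv A X).symm.injective (h1.trans h2.symm)
  have hzero : e.hom ≫ kernel.ι σ = 0 := by
    rw [← hmf, hf0, Functor.map_zero]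
  rw [← Category.id_comp (kernel.ι σ), ← e.inv_hom_id, Category.assoc, hzero, comp_zero]

lemma isIso_jStar_map_unit (X : 𝒞) : IsIso (R.jStar.map (R.adj₄.unit.app X)) := by
  haveI := R.jIns_full
  haveI := R.jIns_faithful
  have tri := R.adj₄.left_triangle_components X
  have heq : R.jStar.map (R.adj₄.unit.app X) = 𝟙 _ ≫ inv (R.adj₄.counit.app (R.jStar.obj X)) :=
    (IsIso.eq_comp_inv _).mpr tri
  rw [Category.id_comp] at heq
  rw [heq]
  infer_instance

lemma isIso_jStar_map_counit (X : 𝒞) : IsIso (R.jStar.map (R.adj₃.counit.app X)) := by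
  haveI := R.jShriek_full
  haveI := R.jShriek_faithful
  have tri := R.adj₃.right_triangle_components X
  have heq : R.jStar.map (R.adj₃.counit.app X) = inv (R.adj₃.unit.app (R.jStar.obj X)) ≫ 𝟙 _ :=
    (IsIso.eq_inv_comp _).mpr tri
  rw [Category.comp_id] at heq
  rw [heq]
  infer_instance

lemma sigma_lift {X T : 𝒞} (t : T ⟶ X) (ht : t ≫ R.adj₄.unit.app X = 0) :
    ∃ s : T ⟶ R.iIns.obj (R.iShriek.obj X), s ≫ R.adj₂.counit.app X = t := by
  haveI := Functor.preservesMonomorphisms_of_adjunction R.adj₃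
  haveI := R.iIns_full
  haveI := R.iIns_faithful
  haveI := R.jStar_additive
  set η := R.adj₄.unit.app X with hη
  haveI := R.isIso_jStar_map_unit X
  have hk0 : R.jStar.map (kernel.ι η) = 0 := by
    rw [← cancel_mono (R.jStar.map η), zero_comp, ← Functor.map_comp, kernel.condition,
      Functor.map_zero]
  have hz : IsZero (R.jStar.obj (kernel η)) :=
    IsZero.of_mono_eq_zero (R.jStar.map (kernel.ι η)) hk0
  obtain ⟨A, ⟨e⟩⟩ := (R.im_eq_ker _).mp hz
  have hfac : R.iIns.map (R.adj₂.homEquiv A X (e.hom ≫ kernel.ι η)) ≫ R.adj₂.counit.app X =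
      e.hom ≫ kernel.ι η := by
    have hx := (R.adj₂.homEquiv A X).symm_apply_apply (e.hom ≫ kernel.ι η)
    rwa [Adjunction.homEquiv_counit] at hx
  refine ⟨kernel.lift η t ht ≫ e.inv ≫ R.iIns.map (R.adj₂.homEquiv A X (e.hom ≫ kernel.ι η)),
    ?_⟩
  rw [Category.assoc, Category.assoc, hfac, ← Category.assoc e.inv, e.inv_hom_id,
    Category.id_comp, kernel.lift_ι]

noncomputable def sigmaIsKernel (X : 𝒞) :
    IsLimit (KernelFork.ofι (R.adj₂.counit.app X) (R.sigma_eta_zero X)) := by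
  haveI := R.mono_sigma X
  exact KernelFork.IsLimit.ofι' _ _ fun {T} t ht =>
    ⟨(R.sigma_lift t ht).choose, (R.sigma_lift t ht).choose_spec⟩

lemma eta_epi (X : 𝒞) (h : IsZero (R.iStar.obj (R.jIns.obj (R.jStar.obj X)))) :
    Epi (R.adj₄.unit.app X) := by
  haveI := R.iIns_full
  haveI := R.iIns_faithful
  haveI := R.iIns_additive
  haveI := R.jStar_additive
  haveI := Functor.preservesEpimorphisms_of_adjunction R.adj₁
  haveI := Functor.preservesEpimorphisms_of_adjunction R.adj₄
  set η := R.adj₄.unit.app X with hη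
  haveI := R.isIso_jStar_map_unit X
  have h1 : IsZero (R.iStar.obj (cokernel η)) :=
    IsZero.of_epi_eq_zero (R.iStar.map (cokernel.π η)) (h.eq_of_src _ _)
  have hc0 : R.jStar.map (cokernel.π η) = 0 := by
    rw [← cancel_epi (R.jStar.map η), comp_zero, ← Functor.map_comp, cokernel.condition,
      Functor.map_zero]
  have h2 : IsZero (R.jStar.obj (cokernel η)) :=
    IsZero.of_epi_eq_zero (R.jStar.map (cokernel.π η)) hc0
  obtain ⟨A, ⟨e⟩⟩ := (R.im_eq_ker _).mp h2
  have hA : IsZero A := by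
    have hAi : IsZero (R.iStar.obj (R.iIns.obj A)) := IsZero.of_iso h1 (R.iStar.mapIso e)
    exact IsZero.of_iso hAi (asIso (R.adj₁.counit.app A)).symm
  have hC : IsZero (cokernel η) := IsZero.of_iso (R.iIns.map_isZero hA) e.symm
  exact Abelian.epi_of_cokernel_π_eq_zero _ (hC.eq_of_tgt _ _)

end Recollement

/-- If `M` is an object of `𝒞` with `i^*(j_*(j^*(M))) = 0`, then there is a short exact
sequence `0 → i_* i^! j_! j^*(M) → j_! j^*(M) ⊕ i_* i^!(M) → M → 0` in `𝒞`, where the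
first map has components `σ_{j_! j^*(M)}` and `i_* i^!(ε_M)`, and the second map is
`(−ε_M, σ_M)`, with `σ` the counit of `(i_*, i^!)` and `ε` the counit of `(j_!, j^*)`. -/
theorem stmt_9 (R : Recollement 𝒜 𝒞 ℬ) (M : 𝒞)
    (h : IsZero (R.iStar.obj (R.jIns.obj (R.jStar.obj M)))) :
    IsSES
      (biprod.lift (R.adj₂.counit.app (R.jShriek.obj (R.jStar.obj M)))
        (R.iIns.map (R.iShriek.map (R.adj₃.counit.app M))))
      (biprod.desc (-(R.adj₃.counit.app M)) (R.adj₂.counit.app M)) := by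
  haveI := R.jIns_additive
  haveI := R.jStar_additive
  set N := R.jShriek.obj (R.jStar.obj M) with hN
  set ε := R.adj₃.counit.app M with hε
  set σM := R.adj₂.counit.app M with hσM
  set σN := R.adj₂.counit.app N with hσN
  set b := R.iIns.map (R.iShriek.map ε) with hb
  haveI := R.mono_sigma M
  haveI := R.mono_sigma N
  have hnat : b ≫ σM = σN ≫ ε := R.adj₂.counit.naturality ε
  have w : biprod.lift σN b ≫ biprod.desc (-ε) σM = 0 := by
    rw [biprod.lift_desc, Preadditive.comp_neg, hnat, neg_add_cancel]
  -- `η_N` is epi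
  have hzN : IsZero (R.iStar.obj (R.jIns.obj (R.jStar.obj N))) := by
    haveI := R.jShriek_full
    haveI := R.jShriek_faithful
    exact IsZero.of_iso h
      ((R.iStar.mapIso (R.jIns.mapIso (asIso (R.adj₃.unit.app (R.jStar.obj M))))).symm)
  have hepiN : Epi (R.adj₄.unit.app N) := R.eta_epi N hzN
  haveI := hepiN
  haveI hepiM : Epi (R.adj₄.unit.app M) := R.eta_epi M h
  -- the natural square for `ε` and `η`
  have hnat2 : ε ≫ R.adj₄.unit.app M = R.adj₄.unit.app N ≫ R.jIns.map (R.jStar.map ε) := by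
    have := R.adj₄.unit.naturality ε
    simpa using this
  haveI : IsIso (R.jStar.map ε) := R.isIso_jStar_map_counit M
  haveI : IsIso (R.jIns.map (R.jStar.map ε)) := inferInstance
  -- epi of the second map
  have hepi : Epi (biprod.desc (-ε) σM) := by
    rw [Preadditive.epi_iff_cancel_zero]
    intro Z q hq
    have h1 : σM ≫ q = 0 := by
      have h1' : biprod.inr ≫ biprod.desc (-ε) σM ≫ q = 0 := by rw [hq, comp_zero]
      rwa [← Category.assoc, biprod.inr_desc] at h1'
    have h2 : ε ≫ q = 0 := by
      have h2' : biprod.inl ≫ biprod.desc (-ε) σM ≫ q = 0 := by rw [hq, comp_zero]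
      rw [← Category.assoc, biprod.inl_desc] at h2'
      simpa [Preadditive.neg_comp, neg_eq_zero] using h2'
    have hcolim := Abelian.epiIsCokernelOfKernel _ (R.sigmaIsKernel M)
    obtain ⟨r, hr⟩ := CokernelCofork.IsColimit.desc' hcolim q h1
    have hr' : R.adj₄.unit.app M ≫ r = q := hr
    have e1 : R.jIns.map (R.jStar.map ε) ≫ r = 0 := by
      rw [← cancel_epi (R.adj₄.unit.app N), comp_zero, ← Category.assoc, ← hnat2,
        Category.assoc, hr']
      exact h2
    have hr0 : r = 0 := by
      rw [← cancel_epi (R.jIns.map (R.jStar.map ε)), comp_zero]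
      exact e1
    rw [← hr', hr0, comp_zero]
  -- mono of the first map
  have hmono : Mono (biprod.lift σN b) := mono_of_mono_fac (biprod.lift_fst σN b)
  -- the first map is a kernel of the second
  have hlim : IsLimit (KernelFork.ofι (biprod.lift σN b) w) := by
    refine KernelFork.IsLimit.ofι' _ _ fun {T} t ht => ?_
    have hT : biprod.lift (t ≫ biprod.fst) (t ≫ biprod.snd) = t := by
      apply biprod.hom_ext <;> simp
    have h' : (t ≫ biprod.fst) ≫ ε = (t ≫ biprod.snd) ≫ σM := by
      have h'' : (t ≫ biprod.fst) ≫ (-ε) + (t ≫ biprod.snd) ≫ σM = 0 := by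
        rw [← biprod.lift_desc, hT]
        exact ht
      rw [Preadditive.comp_neg, neg_add_eq_zero] at h''
      exact h''
    have ht1 : (t ≫ biprod.fst) ≫ R.adj₄.unit.app N = 0 := by
      have haux : (t ≫ biprod.fst) ≫ R.adj₄.unit.app N ≫ R.jIns.map (R.jStar.map ε) = 0 := by
        rw [← hnat2, ← Category.assoc, h', Category.assoc, R.sigma_eta_zero M, comp_zero]
      rw [← cancel_mono (R.jIns.map (R.jStar.map ε)), zero_comp, Category.assoc]
      exact haux
    refine ⟨(R.sigma_lift (t ≫ biprod.fst) ht1).choose, ?_⟩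
    have hs : (R.sigma_lift (t ≫ biprod.fst) ht1).choose ≫ σN = t ≫ biprod.fst :=
      (R.sigma_lift (t ≫ biprod.fst) ht1).choose_spec
    apply biprod.hom_ext
    · rw [Category.assoc, biprod.lift_fst]
      exact hs
    · rw [Category.assoc, biprod.lift_snd]
      rw [← cancel_mono σM, Category.assoc, hnat, ← Category.assoc, hs]
      exact h'
  refine ⟨w, ?_⟩
  exact { exact := ShortComplex.exact_of_f_is_kernel _ hlim,
          mono_f := hmono, epi_g := hepi }
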